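/- Let a_1,…,a_t be nonzero vectors in ℂ^d, let w_1,…,w_t be strictly positive reals, let 𝒢 be the t×t Gram matrix whose (j,k) entry is the inner product of a_j and a_k, and let ρ(𝒢) be its spectral radius. Suppose the relaxation parameters ω_1,…,ω_t satisfy 0 < ω_j < 2‖a_j‖² / (w_j ρ(𝒢)) for every j = 1,…,t. Then the operator P x = x − Σ_{j=1}^{t} (w_j ω_j / ‖a_j‖²) ⟨x, a_j⟩ a_j satisfies ‖P x‖ < ‖x‖ for every nonzero x ∈ H := span{a_1,…,a_t}; equivalently, the operator norm of the restriction of P to H is strictly less than 1. -/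

import Mathlib

-- auxiliary lemmas

open Matrix in
lemma aux_eig_le {t : ℕ} {G : Matrix (Fin t) (Fin t) ℂ} (hG : G.IsHermitian) (ρ : ℝ)
    (hρ : ρ = sSup {r : ℝ | ∃ μ : ℂ,
      Module.End.HasEigenvalue (Matrix.mulVecLin G) μ ∧ r = ‖μ‖}) (i : Fin t) :
    hG.eigenvalues i ≤ ρ := by
  set S := {r : ℝ | ∃ μ : ℂ,
      Module.End.HasEigenvalue (Matrix.mulVecLin G) μ ∧ r = ‖μ‖} with hS
  have hev : Module.End.HasEigenvalue (Matrix.mulVecLin G) ((hG.eigenvalues i : ℝ) : ℂ) := by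
    apply Module.End.hasEigenvalue_of_hasEigenvector
      (x := (hG.eigenvectorBasis i).ofLp)
    constructor
    · rw [Module.End.mem_eigenspace_iff, Matrix.mulVecLin_apply, hG.mulVec_eigenvectorBasis]
      exact RCLike.real_smul_eq_coe_smul _ _
    · intro h0
      have hb : hG.eigenvectorBasis i = 0 := by
        apply (WithLp.equiv 2 (Fin t → ℂ)).injective; simpa using h0
      have hn := hG.eigenvectorBasis.orthonormal.1 i
      rw [hb] at hn; simp at hn
  have hmem : (‖((hG.eigenvalues i : ℝ) : ℂ)‖ : ℝ) ∈ S := ⟨_, hev, rfl⟩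
  have hbdd : BddAbove S := by
    have hfin : S.Finite := by
      apply Set.Finite.subset
        (Set.Finite.image (fun μ : ℂ => ‖μ‖) (Module.End.finite_spectrum (Matrix.mulVecLin G)))
      rintro r ⟨μ, hμ, rfl⟩
      exact ⟨μ, Module.End.hasEigenvalue_iff_mem_spectrum.mp hμ, rfl⟩
    exact hfin.bddAbove
  calc hG.eigenvalues i ≤ |hG.eigenvalues i| := le_abs_self _
    _ = ‖((hG.eigenvalues i : ℝ) : ℂ)‖ := by rw [Complex.norm_real, Real.norm_eq_abs]
    _ ≤ ρ := hρ ▸ le_csSup hbdd hmem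

lemma aux_rayleigh {t : ℕ} {G : Matrix (Fin t) (Fin t) ℂ} (hG : G.IsHermitian) {r : ℝ}
    (hr : ∀ i, hG.eigenvalues i ≤ r) (v : Fin t → ℂ) :
    Complex.re (∑ j, (starRingEnd ℂ) (v j) * (G.mulVec v) j) ≤ r * ∑ j, ‖v j‖ ^ 2 := by
  set v' : EuclideanSpace ℂ (Fin t) := (WithLp.equiv 2 (Fin t → ℂ)).symm v with hv'
  have hv'app : ∀ j, v' j = v j := fun j => rfl
  set T := Matrix.toEuclideanLin G with hT
  have hsymm := Matrix.isHermitian_iff_isSymmetric.mp hG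
  set b := hG.eigenvectorBasis with hb
  have hTb : ∀ i, T (b i) = (hG.eigenvalues i : ℂ) • b i := by
    intro i
    apply (WithLp.equiv 2 (Fin t → ℂ)).injective
    rw [hT, Matrix.toEuclideanLin_apply, hG.mulVec_eigenvectorBasis,
      RCLike.real_smul_eq_coe_smul (K := ℂ)]
    rfl
  have hrepr : ∀ i, b.repr (T v') i = (hG.eigenvalues i : ℂ) * b.repr v' i := by
    intro i
    rw [b.repr_apply_apply, b.repr_apply_apply, ← hsymm (b i) v', hTb, inner_smul_left]
    simp [Complex.conj_ofReal]
  have h1 : (inner ℂ v' (T v') : ℂ) = ∑ j, (starRingEnd ℂ) (v j) * (G.mulVec v) j := by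
    rw [PiLp.inner_apply]
    refine Finset.sum_congr rfl fun j _ => ?_
    rw [RCLike.inner_apply, hv'app, mul_comm]
    congr 1
  have h2 : (inner ℂ v' (T v') : ℂ)
      = ((∑ i, hG.eigenvalues i * ‖b.repr v' i‖ ^ 2 : ℝ) : ℂ) := by
    rw [← b.repr.inner_map_map v' (T v'), PiLp.inner_apply]
    push_cast
    refine Finset.sum_congr rfl fun i _ => ?_
    rw [RCLike.inner_apply, hrepr,
      show (hG.eigenvalues i : ℂ) * b.repr v' i * (starRingEnd ℂ) (b.repr v' i)
        = (hG.eigenvalues i : ℂ) * (b.repr v' i * (starRingEnd ℂ) (b.repr v' i)) by ring,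
      Complex.mul_conj']
  have h3 : Complex.re (∑ j, (starRingEnd ℂ) (v j) * (G.mulVec v) j)
      = ∑ i, hG.eigenvalues i * ‖b.repr v' i‖ ^ 2 := by
    rw [← h1, h2, Complex.ofReal_re]
  rw [h3]
  have h4 : ∑ j, ‖v j‖ ^ 2 = ∑ i, ‖b.repr v' i‖ ^ 2 := by
    have hnorm : ‖v'‖ ^ 2 = ‖b.repr v'‖ ^ 2 := by rw [b.repr.norm_map]
    have e1 : ‖v'‖ ^ 2 = ∑ j, ‖v j‖ ^ 2 := by
      rw [EuclideanSpace.norm_eq, Real.sq_sqrt (by positivity)]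
      exact Finset.sum_congr rfl fun j _ => by rw [hv'app]
    have e2 : ‖b.repr v'‖ ^ 2 = ∑ i, ‖b.repr v' i‖ ^ 2 := by
      rw [EuclideanSpace.norm_eq, Real.sq_sqrt (by positivity)]
    rw [← e1, hnorm, e2]
  rw [h4, Finset.mul_sum]
  apply Finset.sum_le_sum
  intro i _
  have : (0:ℝ) ≤ ‖b.repr v' i‖ ^ 2 := by positivity
  nlinarith [hr i]

/-- For nonzero vectors `a_1,…,a_t` in `ℂ^d` with Gram matrix `𝒢` of spectral
radius `ρ(𝒢)`, positive weights `w_j`, and relaxation parameters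
`0 < ω_j < 2‖a_j‖²/(w_j ρ(𝒢))`, the operator
`P x = x − Σ_j (w_j ω_j/‖a_j‖²) ⟨x,a_j⟩ a_j` satisfies `‖P x‖ < ‖x‖` for every nonzero
`x ∈ span{a_1,…,a_t}`. -/
theorem stmt_17 {d t : ℕ} (a : Fin t → EuclideanSpace ℂ (Fin d)) (ha : ∀ j, a j ≠ 0)
    (w : Fin t → ℝ) (hw : ∀ j, 0 < w j)
    (𝒢 : Matrix (Fin t) (Fin t) ℂ) (h𝒢 : ∀ j k, 𝒢 j k = (inner ℂ (a j) (a k) : ℂ))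
    (ρ : ℝ)
    (hρ : ρ = sSup {r : ℝ | ∃ μ : ℂ,
      Module.End.HasEigenvalue (Matrix.mulVecLin 𝒢) μ ∧ r = ‖μ‖})
    (ω : Fin t → ℝ) (hω : ∀ j, 0 < ω j ∧ ω j < 2 * ‖a j‖ ^ 2 / (w j * ρ))
    (P : EuclideanSpace ℂ (Fin d) → EuclideanSpace ℂ (Fin d))
    (hP : ∀ x, P x = x - ∑ j, (((w j * ω j / ‖a j‖ ^ 2 : ℝ) : ℂ) * (inner ℂ (a j) x : ℂ)) • a j) :
    ∀ x ∈ Submodule.span ℂ (Set.range a), x ≠ 0 → ‖P x‖ < ‖x‖ := by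
  intro x hx hx0
  -- some inner product is nonzero
  have hinner_ex : ∃ j, (inner ℂ (a j) x : ℂ) ≠ 0 := by
    by_contra h
    push_neg at h
    obtain ⟨cf, hcf⟩ := (Submodule.mem_span_range_iff_exists_fun ℂ).mp hx
    apply hx0
    have hxx : (inner ℂ x x : ℂ) = 0 := by
      conv_lhs => rw [← hcf, sum_inner]
      exact Finset.sum_eq_zero fun j _ => by rw [inner_smul_left, hcf, h j, mul_zero]
    exact inner_self_eq_zero.mp hxx
  obtain ⟨j0, hj0⟩ := hinner_ex
  -- positivity of ρ
  have hρpos : 0 < ρ := by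
    by_contra hcon
    push_neg at hcon
    have h1 := (hω j0).1
    have h2 := (hω j0).2
    have hnum : (0:ℝ) ≤ 2 * ‖a j0‖ ^ 2 := by positivity
    have hden : w j0 * ρ ≤ 0 := mul_nonpos_of_nonneg_of_nonpos (hw j0).le hcon
    have : 2 * ‖a j0‖ ^ 2 / (w j0 * ρ) ≤ 0 := div_nonpos_of_nonneg_of_nonpos hnum hden
    linarith
  -- coefficients
  set c : Fin t → ℝ := fun j => w j * ω j / ‖a j‖ ^ 2 with hc
  have hnormpos : ∀ j, (0:ℝ) < ‖a j‖ ^ 2 := fun j =>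
    pow_pos (norm_pos_iff.mpr (ha j)) 2
  have hcpos : ∀ j, 0 < c j := fun j =>
    div_pos (mul_pos (hw j) (hω j).1) (hnormpos j)
  have hcρ : ∀ j, c j * ρ < 2 := by
    intro j
    have h2 := (hω j).2
    have hwρ : 0 < w j * ρ := mul_pos (hw j) hρpos
    rw [lt_div_iff₀ hwρ] at h2
    rw [hc]
    rw [div_mul_eq_mul_div, div_lt_iff₀ (hnormpos j)]
    nlinarith
  set lam : Fin t → ℂ := fun j => ((c j : ℝ) : ℂ) * (inner ℂ (a j) x : ℂ) with hlam
  set g : Fin t → ℝ := fun j => ‖(inner ℂ (a j) x : ℂ)‖ ^ 2 with hg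
  have hgnn : ∀ j, 0 ≤ g j := fun j => by positivity
  have hgj0 : 0 < g j0 := by
    have : ‖(inner ℂ (a j0) x : ℂ)‖ ≠ 0 := norm_ne_zero_iff.mpr hj0
    positivity
  set s : EuclideanSpace ℂ (Fin d) := ∑ j, lam j • a j with hs
  -- Gram matrix is Hermitian
  have hGh : 𝒢.IsHermitian := by
    apply Matrix.IsHermitian.ext
    intro j k
    rw [h𝒢, h𝒢]
    show (starRingEnd ℂ) (inner ℂ (a k) (a j) : ℂ) = (inner ℂ (a j) (a k) : ℂ)
    exact inner_conj_symm (𝕜 := ℂ) (a j) (a k)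
  -- eigenvalue bound
  have heig : ∀ i, hGh.eigenvalues i ≤ ρ := aux_eig_le hGh ρ hρ
  -- norm of lam
  have hlamnorm : ∀ j, ‖lam j‖ ^ 2 = c j ^ 2 * g j := by
    intro j
    rw [hlam]
    simp only [norm_mul, Complex.norm_real, Real.norm_eq_abs, abs_of_pos (hcpos j)]
    rw [mul_pow, hg]
  -- ‖s‖² bound via Rayleigh
  have hsnorm : ‖s‖ ^ 2 ≤ ρ * ∑ j, c j ^ 2 * g j := by
    have hray := aux_rayleigh hGh heig lam
    have hss : (inner ℂ s s : ℂ) = ∑ j, (starRingEnd ℂ) (lam j) * (𝒢.mulVec lam) j := by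
      rw [hs, sum_inner]
      refine Finset.sum_congr rfl fun j _ => ?_
      rw [inner_smul_left, inner_sum, Matrix.mulVec, dotProduct]
      rw [Finset.mul_sum, Finset.mul_sum]
      refine Finset.sum_congr rfl fun k _ => ?_
      rw [inner_smul_right, h𝒢]
      ring
    have : ‖s‖ ^ 2 = Complex.re (inner ℂ s s : ℂ) := by
      simpa using (inner_self_eq_norm_sq (𝕜 := ℂ) s).symm
    rw [this, hss]
    calc Complex.re (∑ j, (starRingEnd ℂ) (lam j) * (𝒢.mulVec lam) j)
        ≤ ρ * ∑ j, ‖lam j‖ ^ 2 := hray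
      _ = ρ * ∑ j, c j ^ 2 * g j := by
          congr 1
          exact Finset.sum_congr rfl fun j _ => hlamnorm j
  -- inner x s
  have hxs : Complex.re (inner ℂ x s : ℂ) = ∑ j, c j * g j := by
    have : (inner ℂ x s : ℂ) = ((∑ j, c j * g j : ℝ) : ℂ) := by
      rw [hs, inner_sum]
      push_cast
      refine Finset.sum_congr rfl fun j _ => ?_
      rw [inner_smul_right, ← inner_conj_symm x (a j)]
      rw [show ((c j : ℝ) : ℂ) * (inner ℂ (a j) x : ℂ) * (starRingEnd ℂ) (inner ℂ (a j) x : ℂ)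
          = ((c j : ℝ) : ℂ) * ((inner ℂ (a j) x : ℂ) * (starRingEnd ℂ) (inner ℂ (a j) x : ℂ)) by ring,
        Complex.mul_conj']
      rw [hg]
      push_cast
      ring
    rw [this, Complex.ofReal_re]
  -- strict inequality of squares
  have hsq : ‖P x‖ ^ 2 < ‖x‖ ^ 2 := by
    have hPx : P x = x - s := by
      rw [hP x, hs]
    rw [hPx, norm_sub_sq (𝕜 := ℂ), RCLike.re_to_complex]
    have hterm : 0 < ∑ j, (2 - ρ * c j) * (c j * g j) := by
      have hnn : ∀ j ∈ Finset.univ, (0:ℝ) ≤ (2 - ρ * c j) * (c j * g j) := by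
        intro j _
        have h1 : 0 ≤ 2 - ρ * c j := by
          have := hcρ j
          nlinarith
        exact mul_nonneg h1 (mul_nonneg (hcpos j).le (hgnn j))
      refine Finset.sum_pos' hnn ⟨j0, Finset.mem_univ j0, ?_⟩
      have h1 : 0 < 2 - ρ * c j0 := by
        have := hcρ j0
        nlinarith
      exact mul_pos h1 (mul_pos (hcpos j0) hgj0)
    have hexp : ∑ j, (2 - ρ * c j) * (c j * g j)
        = 2 * (∑ j, c j * g j) - ρ * ∑ j, c j ^ 2 * g j := by
      rw [Finset.mul_sum, Finset.mul_sum, ← Finset.sum_sub_distrib]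
      refine Finset.sum_congr rfl fun j _ => by ring
    rw [hexp] at hterm
    rw [hxs]
    linarith [hsnorm]
  by_contra hcon
  push_neg at hcon
  have := pow_le_pow_left₀ (norm_nonneg x) hcon 2
  linarith
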